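/- Let k2, k3, k4, k̃2, k̃3, k̃4 > 0 with α1 + α2 = -(k2+k3+k4), α1·α2 = k2·k4, α̃1 + α̃2 = -(k̃2+k̃3+k̃4), α̃1·α̃2 = k̃2·k̃4. If {α1, α2} = {α̃1, α̃2} and k3 + k4 = k̃3 + k̃4, then k2 = k̃2, k3 = k̃3, and k4 = k̃4. -/
import Mathlib

theorem stmt_16 (k2 k3 k4 tk2 tk3 tk4 : ℝ)
    (h2 : 0 < k2) (h3 : 0 < k3) (h4 : 0 < k4)
    (th2 : 0 < tk2) (th3 : 0 < tk3) (th4 : 0 < tk4)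
    (α1 α2 tα1 tα2 : ℝ)
    (hsum : α1 + α2 = -(k2 + k3 + k4)) (hprod : α1 * α2 = k2 * k4)
    (htsum : tα1 + tα2 = -(tk2 + tk3 + tk4)) (htprod : tα1 * tα2 = tk2 * tk4)
    (hset : ({α1, α2} : Set ℝ) = {tα1, tα2})
    (h34 : k3 + k4 = tk3 + tk4) :
    k2 = tk2 ∧ k3 = tk3 ∧ k4 = tk4 := by
  have ha1 : α1 = tα1 ∨ α1 = tα2 := by
    have : α1 ∈ ({tα1, tα2} : Set ℝ) := hset ▸ (by simp)
    simpa using this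
  have ha2 : α2 = tα1 ∨ α2 = tα2 := by
    have : α2 ∈ ({tα1, tα2} : Set ℝ) := hset ▸ (by simp)
    simpa using this
  have hb1 : tα1 = α1 ∨ tα1 = α2 := by
    have : tα1 ∈ ({α1, α2} : Set ℝ) := hset ▸ (by simp)
    simpa using this
  have hb2 : tα2 = α1 ∨ tα2 = α2 := by
    have : tα2 ∈ ({α1, α2} : Set ℝ) := hset ▸ (by simp)
    simpa using this
  have hs : α1 + α2 = tα1 + tα2 ∧ α1 * α2 = tα1 * tα2 := by
    rcases ha1 with h|h <;> rcases ha2 with h'|h' <;>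
      rcases hb1 with g|g <;> rcases hb2 with g'|g' <;>
      subst_vars <;> exact ⟨by ring, by ring⟩
  obtain ⟨hS, hP⟩ := hs
  have e2 : k2 = tk2 := by linarith
  have e4 : k4 = tk4 := by
    have : k2 * k4 = tk2 * tk4 := by linarith
    rw [e2] at this
    exact mul_left_cancel₀ (ne_of_gt th2) this
  exact ⟨e2, by linarith, e4⟩
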